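/- Let R be an n×n real matrix with nonnegative entries such that every row sum satisfies ∑_v R(u,v) ≤ d and the total sum of all entries satisfies ∑_{u,v} R(u,v) ≤ ε n d, where d > 0 and ε > 0. Let φ ∈ ℝ^n satisfy |φ_u| ≤ C/√n for all u. Then ‖Rφ‖₂ ≤ C·√ε·d. -/

import Mathlib

open Matrix Finset

/-- If `R` is an `n×n` nonnegative matrix with row sums at most `d`
and total entry sum at most `εnd`, and `φ` satisfies `|φ_u| ≤ C/√n` for all `u`, then
`‖Rφ‖₂ ≤ C√ε·d`. -/
theorem sparse_matrix_flat_vector_bound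
    {n : ℕ} (hn : 0 < n) (R : Matrix (Fin n) (Fin n) ℝ)
    (d ε C : ℝ) (hd : 0 < d) (hε : 0 < ε)
    (hR_nonneg : ∀ u v, 0 ≤ R u v)
    (hrow : ∀ u, ∑ v, R u v ≤ d)
    (htot : ∑ u, ∑ v, R u v ≤ ε * n * d)
    (φ : EuclideanSpace ℝ (Fin n))
    (hφ : ∀ u, |φ u| ≤ C / Real.sqrt n) :
    ‖(show EuclideanSpace ℝ (Fin n) from WithLp.toLp 2 (R.mulVec φ))‖ ≤ C * Real.sqrt ε * d := by
  have hsn : (0:ℝ) < Real.sqrt n := Real.sqrt_pos.2 (by exact_mod_cast hn)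
  have hCdiv : 0 ≤ C / Real.sqrt n :=
    le_trans (abs_nonneg _) (hφ ⟨0, hn⟩)
  have hC : 0 ≤ C := by
    have := mul_nonneg hCdiv hsn.le
    rwa [div_mul_cancel₀ _ hsn.ne'] at this
  -- bound each entry of R.mulVec φ
  have key : ∀ u, |R.mulVec φ u| ≤ (C / Real.sqrt n) * ∑ v, R u v := by
    intro u
    have : |∑ v, R u v * φ v| ≤ ∑ v, R u v * (C / Real.sqrt n) := by
      refine (Finset.abs_sum_le_sum_abs _ _).trans (Finset.sum_le_sum fun v _ => ?_)
      rw [abs_mul, abs_of_nonneg (hR_nonneg u v)]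
      exact mul_le_mul_of_nonneg_left (hφ v) (hR_nonneg u v)
    simpa [Matrix.mulVec, dotProduct, Finset.sum_mul, mul_comm] using this
  have hrownn : ∀ u, 0 ≤ ∑ v, R u v := fun u =>
    Finset.sum_nonneg fun v _ => hR_nonneg u v
  -- bound the sum of squares
  have hsq : ∑ u, (R.mulVec φ u) ^ 2 ≤ C ^ 2 * ε * d ^ 2 := by
    have h1 : ∑ u, (R.mulVec φ u) ^ 2 ≤
        ∑ u, (C / Real.sqrt n) ^ 2 * (d * ∑ v, R u v) := by
      refine Finset.sum_le_sum fun u _ => ?_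
      have h2 : (R.mulVec φ u) ^ 2 ≤ ((C / Real.sqrt n) * ∑ v, R u v) ^ 2 := by
        rw [← sq_abs (R.mulVec φ u)]
        exact pow_le_pow_left₀ (abs_nonneg _) (key u) 2
      have h3 : (∑ v, R u v) ^ 2 ≤ d * ∑ v, R u v := by
        rw [sq]
        exact mul_le_mul_of_nonneg_right (hrow u) (hrownn u)
      calc (R.mulVec φ u) ^ 2 ≤ ((C / Real.sqrt n) * ∑ v, R u v) ^ 2 := h2
        _ = (C / Real.sqrt n) ^ 2 * (∑ v, R u v) ^ 2 := by ring
        _ ≤ (C / Real.sqrt n) ^ 2 * (d * ∑ v, R u v) :=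
            mul_le_mul_of_nonneg_left h3 (sq_nonneg _)
    have hsq_n : Real.sqrt n ^ 2 = (n:ℝ) := Real.sq_sqrt (by positivity)
    have h4 : ∑ u, (C / Real.sqrt n) ^ 2 * (d * ∑ v, R u v)
        = (C ^ 2 / n) * d * ∑ u, ∑ v, R u v := by
      rw [← Finset.mul_sum, ← Finset.mul_sum, div_pow, hsq_n]
      ring
    have h5 : (C ^ 2 / n) * d * ∑ u, ∑ v, R u v ≤ (C ^ 2 / n) * d * (ε * n * d) := by
      refine mul_le_mul_of_nonneg_left htot (by positivity)
    have hn' : (0:ℝ) < n := by exact_mod_cast hn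
    calc ∑ u, (R.mulVec φ u) ^ 2 ≤ (C ^ 2 / n) * d * ∑ u, ∑ v, R u v := by
          rw [← h4]; exact h1
      _ ≤ (C ^ 2 / n) * d * (ε * n * d) := h5
      _ = C ^ 2 * ε * d ^ 2 := by field_simp
  -- conclude
  rw [EuclideanSpace.norm_eq]
  have : Real.sqrt (∑ u, ‖R.mulVec φ u‖ ^ 2) ≤ Real.sqrt (C ^ 2 * ε * d ^ 2) := by
    apply Real.sqrt_le_sqrt
    simpa [Real.norm_eq_abs, sq_abs] using hsq
  refine this.trans_eq ?_
  rw [show C ^ 2 * ε * d ^ 2 = (C * Real.sqrt ε * d)^2 by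
    rw [mul_pow, mul_pow, Real.sq_sqrt hε.le]]
  exact Real.sqrt_sq (by positivity)
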